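/- Let a,b,c,d be positive integers with b and d even, let A be the 3×3 generalized Cartan matrix with rows (2,−a,−b), (−c,2,−d), (−1,−1,2), and let F be a field. Then K_2(A,F) is isomorphic to K_2(2,F)/((ad−bc)/2)⟨{u²,v}⟩. -/

import Mathlib

/-- An abstract Steinberg cocycle with values in an additive commutative group. -/
structure SCoc (F : Type) [Field F] (A : Type) [AddCommGroup A] where
  s : Fˣ → Fˣ → A
  r1 : ∀ t u v : Fˣ, s t u + s (t * u) v = s t (u * v) + s u v
  r2 : s 1 1 = 0
  r3 : ∀ u v : Fˣ, s u v = s u⁻¹ v⁻¹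
  r4 : ∀ u v w : Fˣ, ((w : F) = 1 - (u : F)) → s u v = s u (w * v)

namespace SCoc

variable {F : Type} [Field F] {A : Type} [AddCommGroup A] (c : SCoc F A)

theorem s_one_left (v : Fˣ) : c.s 1 v = 0 := by
  have h := c.r1 1 1 v
  rw [one_mul, one_mul] at h
  linear_combination (norm := abel) c.r2 - h

theorem s_one_right (u : Fˣ) : c.s u 1 = 0 := by
  have h := c.r1 u 1 1
  rw [mul_one, one_mul] at h
  linear_combination (norm := abel) h + c.r2

theorem s_steinberg (u w : Fˣ) (hw : (w : F) = 1 - (u : F)) : c.s u w = 0 := by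
  have h := c.r4 u 1 w hw
  rw [mul_one, c.s_one_right] at h
  exact h.symm

theorem s_g4 (u v : Fˣ) : c.s u v = c.s u (-u * v) := by
  rcases eq_or_ne u 1 with rfl | hu
  · rw [c.s_one_left, c.s_one_left]
  · have hu0 : (u : F) ≠ 0 := u.ne_zero
    have hu1 : (u : F) ≠ 1 := fun h1 => hu (Units.ext (by simpa using h1))
    have huinv : ((u⁻¹ : Fˣ) : F) ≠ 1 := by
      intro hh
      have h2 : (u⁻¹ : Fˣ) = 1 := Units.ext (by simpa using hh)
      exact hu (by simpa using congrArg (·⁻¹) h2)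
    set w : Fˣ := Units.mk0 (1 - (u : F)) (sub_ne_zero.2 (Ne.symm hu1)) with hwdef
    set w' : Fˣ := Units.mk0 (1 - ((u⁻¹ : Fˣ) : F)) (sub_ne_zero.2 (Ne.symm huinv)) with hw'def
    have hw : (w : F) = 1 - (u : F) := rfl
    have hw' : ((w' : Fˣ) : F) = 1 - ((u⁻¹ : Fˣ) : F) := rfl
    have key : w = -u * w' := by
      apply Units.ext
      rw [Units.val_mul, hw, hw', Units.val_neg, Units.val_inv_eq_inv_val]
      field_simp
      ring
    calc c.s u v = c.s u⁻¹ v⁻¹ := c.r3 u v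
      _ = c.s u⁻¹ (w' * v⁻¹) := c.r4 u⁻¹ v⁻¹ w' hw'
      _ = c.s u (w'⁻¹ * v) := by rw [c.r3 u (w'⁻¹ * v)]; rw [mul_inv, inv_inv]
      _ = c.s u (w * (w'⁻¹ * v)) := c.r4 u (w'⁻¹ * v) w hw
      _ = c.s u (-u * v) := by
          rw [key, mul_assoc, ← mul_assoc w' w'⁻¹, mul_inv_cancel, one_mul]

theorem s_g5 (u v : Fˣ) : c.s u (u * u * v) = c.s u v := by
  have h2 := c.s_g4 u (-u * v)
  rw [← c.s_g4 u v] at h2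
  have e : -u * (-u * v) = u * u * v := by
    rw [neg_mul u v, neg_mul_neg, ← mul_assoc]
  rw [e] at h2
  exact h2.symm

/-- `lam u = s u (-1)`. -/
def lam (u : Fˣ) : A := c.s u (-1)

theorem s_self (u : Fˣ) : c.s u u = c.lam u := by
  simp only [lam]
  have h := c.s_g4 u (-1)
  rw [neg_mul_neg, mul_one] at h
  exact h.symm

theorem s_inv_self (u : Fˣ) : c.s u u⁻¹ = c.lam u := by
  simp only [lam]
  have h := c.s_g4 u u⁻¹
  rw [neg_mul, mul_inv_cancel] at h
  exact h

theorem s_neg_self (u : Fˣ) : c.s u (-u) = 0 := by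
  have h := c.s_g4 u 1
  rw [mul_one, c.s_one_right] at h
  exact h.symm

theorem s_neg_right (t u : Fˣ) : c.s t (-u) = c.s t u + c.lam (t * u) - c.lam u := by
  have h := c.r1 t u (-1)
  rw [mul_neg_one] at h
  simp only [lam]
  linear_combination (norm := abel) -h

theorem s_mul_self_right (t x : Fˣ) : c.s t (t * x) = c.s t (-x) := by
  have h := c.s_g4 t (t * x)
  have e : -t * (t * x) = t * t * (-x) := by
    rw [neg_mul, mul_neg, mul_assoc]
  rw [e, c.s_g5] at h
  exact h

theorem lam_one : c.lam 1 = 0 := c.s_one_left _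

theorem lam_neg (t : Fˣ) : c.lam (-t) = c.lam (-1) - c.lam t := by
  have h := c.s_neg_right t (-1)
  rw [neg_neg, c.s_one_right, mul_neg_one] at h
  simp only [lam] at h ⊢
  linear_combination (norm := abel) -h

theorem lam_inv (u : Fˣ) : c.lam u⁻¹ = c.lam u := by
  simp only [lam]
  rw [c.r3 u⁻¹ (-1), inv_inv, inv_neg, inv_one]

theorem star1 (u v : Fˣ) :
    c.s (u * u) v = c.s u v + c.s u v + c.lam (u * v) - c.lam u - c.lam v := by
  have h := c.r1 u u v
  rw [c.s_self] at h
  have h2 : c.s u (u * v) = c.s u v + c.lam (u * v) - c.lam v :=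
    (c.s_mul_self_right u v).trans (c.s_neg_right u v)
  linear_combination (norm := abel) h + h2

theorem s_mul_right_snd (u v : Fˣ) : c.s (u * v) v = c.s u v + c.lam (u * v) - c.lam u := by
  have h3 := c.r1 v u v
  rw [mul_comm v u] at h3
  have e1 := c.s_mul_self_right v u
  rw [mul_comm v u] at e1
  have e2 := c.s_neg_right v u
  rw [mul_comm v u] at e2
  have h4 := e1.trans e2
  linear_combination (norm := abel) h3 + h4

theorem star2 (u v : Fˣ) :
    c.s u (v * v) = c.s u v + c.s u v + c.lam (u * v) - c.lam u - c.lam v := by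
  have h := c.r1 u v v
  rw [c.s_self] at h
  linear_combination (norm := abel) -h + c.s_mul_right_snd u v

theorem p2 (u v : Fˣ) : c.s (u * u) v = c.s u (v * v) := by rw [c.star1, c.star2]

theorem lam_sq (u : Fˣ) : c.lam (u * u) = 0 := by
  have h := c.star1 u (-1)
  rw [mul_neg_one, c.lam_neg] at h
  have h' : c.s (u * u) (-1) = c.lam (u * u) := rfl
  have h'' : c.s u (-1) = c.lam u := rfl
  rw [h', h''] at h
  linear_combination (norm := abel) h

theorem s_sq_neg_right (u w : Fˣ) : c.s (u * u) (-w) = c.s (u * u) w := by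
  have e1 := c.star1 u (-w)
  rw [mul_neg, c.lam_neg (u * w), c.lam_neg w, c.s_neg_right u w] at e1
  linear_combination (norm := abel) e1 - c.star1 u w

theorem lam_sq_mul (u w : Fˣ) : c.lam (u * u * w) = c.lam w := by
  have h := c.r1 (u * u) w (-1)
  rw [mul_neg_one, c.s_sq_neg_right] at h
  have h' : c.s (u * u * w) (-1) = c.lam (u * u * w) := rfl
  have h'' : c.s w (-1) = c.lam w := rfl
  rw [h', h''] at h
  linear_combination (norm := abel) h

theorem key_aux1 (u v : Fˣ) :
    c.s u⁻¹ v = c.lam u - c.s u v - c.lam (u * v) + c.lam v := by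
  have h := c.r1 u u⁻¹ v
  rw [mul_inv_cancel, c.s_one_left, c.s_inv_self] at h
  have e2 : u * u * (u⁻¹ * v) = u * v := by
    rw [mul_assoc, ← mul_assoc u u⁻¹, mul_inv_cancel, one_mul]
  have e := c.s_g5 u (u⁻¹ * v)
  rw [e2] at e
  have h2 : c.s u (u⁻¹ * v) = c.s u v + c.lam (u * v) - c.lam v :=
    e.symm.trans ((c.s_mul_self_right u v).trans (c.s_neg_right u v))
  linear_combination (norm := abel) -h - h2

theorem k3 (u v : Fˣ) :
    c.s v u⁻¹ = c.s u v + c.lam (u * v) - c.lam (v * u⁻¹) := by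
  have h := c.r1 u v (u * v)⁻¹
  have e1 : v * (u * v)⁻¹ = u⁻¹ := by
    rw [mul_inv_rev, ← mul_assoc, mul_inv_cancel, one_mul]
  rw [e1, c.s_inv_self, c.s_inv_self] at h
  have e3 : v * v * (u * v)⁻¹ = v * u⁻¹ := by
    rw [mul_inv_rev, ← mul_assoc, mul_assoc v v v⁻¹, mul_inv_cancel, mul_one]
  have e4 := c.s_g5 v ((u * v)⁻¹)
  rw [e3] at e4
  have e5 : c.s v ((u * v)⁻¹) = c.s v u⁻¹ + c.lam (v * u⁻¹) - c.lam u⁻¹ :=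
    e4.symm.trans ((c.s_mul_self_right v u⁻¹).trans (c.s_neg_right v u⁻¹))
  have e6 := c.lam_inv u
  linear_combination (norm := abel) -h - e5 + e6

theorem key (u v : Fˣ) : c.s v u = c.lam u + c.lam v - c.lam (u * v) - c.s u v := by
  have h := c.k3 u⁻¹ v
  rw [inv_inv] at h
  have e2 : u * u * (u⁻¹ * v) = u * v := by
    rw [mul_assoc, ← mul_assoc u u⁻¹, mul_inv_cancel, one_mul]
  have e : c.lam (u⁻¹ * v) = c.lam (u * v) := by
    have := c.lam_sq_mul u (u⁻¹ * v)
    rw [e2] at this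
    exact this.symm
  have e7 := c.key_aux1 u v
  rw [mul_comm v u] at h
  linear_combination (norm := abel) h + e7 + e

/-- The bilinear pairing `β u v = s u v - s v u = s (u*u) v`. -/
def beta (u v : Fˣ) : A := c.s u v - c.s v u

theorem beta_eq_sq (u v : Fˣ) : c.beta u v = c.s (u * u) v := by
  simp only [beta]
  linear_combination (norm := abel) -c.star1 u v - c.key u v

theorem beta_antisym (u v : Fˣ) : c.beta v u = -c.beta u v := by
  simp only [beta]; abel

theorem beta_add_right (u v w : Fˣ) : c.beta u (v * w) = c.beta u v + c.beta u w := by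
  have h1 := c.r1 u v w
  have h2 := c.r1 v w u
  have h3 := c.r1 v u w
  rw [mul_comm v u] at h3
  rw [mul_comm w u] at h2
  simp only [beta]
  linear_combination (norm := abel) -h1 - h2 + h3

theorem beta_add_left (u w v : Fˣ) : c.beta (u * w) v = c.beta u v + c.beta w v := by
  have h := c.beta_add_right v u w
  have := c.beta_antisym v (u * w)
  linear_combination (norm := abel) c.beta_antisym v (u * w) - c.beta_antisym v u
    - c.beta_antisym v w - h

theorem beta_one_left (v : Fˣ) : c.beta 1 v = 0 := by
  simp only [beta, c.s_one_left, c.s_one_right]; abel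

theorem beta_inv_left (u v : Fˣ) : c.beta u⁻¹ v = -c.beta u v := by
  have h := c.beta_add_left u u⁻¹ v
  rw [mul_inv_cancel, c.beta_one_left] at h
  linear_combination (norm := abel) -h

theorem beta_zsmul_left (u v : Fˣ) (k : ℤ) : c.beta (u ^ k) v = k • c.beta u v := by
  induction k using Int.induction_on with
  | zero => rw [zpow_zero, c.beta_one_left]; simp
  | succ n ih =>
      rw [zpow_add_one, c.beta_add_left, ih, add_smul, one_smul]
  | pred n ih =>
      rw [zpow_sub_one, c.beta_add_left, ih, c.beta_inv_left, sub_smul, one_smul]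
      abel

theorem beta_one_right (u : Fˣ) : c.beta u 1 = 0 := by
  simp only [beta, c.s_one_left, c.s_one_right]; abel

theorem beta_inv_right (u v : Fˣ) : c.beta u v⁻¹ = -c.beta u v := by
  have h := c.beta_add_right u v v⁻¹
  rw [mul_inv_cancel, c.beta_one_right] at h
  linear_combination (norm := abel) -h

theorem beta_zsmul_right (u v : Fˣ) (k : ℤ) : c.beta u (v ^ k) = k • c.beta u v := by
  induction k using Int.induction_on with
  | zero => rw [zpow_zero, c.beta_one_right]; simp
  | succ n ih => rw [zpow_add_one, c.beta_add_right, ih, add_smul, one_smul]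
  | pred n ih =>
      rw [zpow_sub_one, c.beta_add_right, ih, c.beta_inv_right, sub_smul, one_smul]
      abel

theorem s_even_left (u v : Fˣ) (k : ℤ) : c.s (u ^ (2 * k)) v = k • c.beta u v := by
  have e : u ^ (2 * k) = u ^ k * u ^ k := by
    rw [two_mul, zpow_add]
  rw [e, ← c.beta_eq_sq, c.beta_zsmul_left]

theorem s_even_right (u v : Fˣ) (k : ℤ) : c.s u (v ^ (2 * k)) = k • c.beta u v := by
  have e : v ^ (2 * k) = v ^ k * v ^ k := by
    rw [two_mul, zpow_add]
  rw [e, ← c.p2, ← c.beta_eq_sq, c.beta_zsmul_right]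

theorem beta_steinberg (u w : Fˣ) (hw : (w : F) = 1 - (u : F)) : c.beta u w = 0 := by
  have h1 := c.s_steinberg u w hw
  have h2 := c.s_steinberg w u (by rw [hw]; ring)
  simp only [beta, h1, h2]; abel

end SCoc



/-!
Common definitions: presentations of the abelian groups `K₂(F)`, `K₂(2,F)` and `K₂(A,F)`
(Rehmann–Morita).  "The abelian group generated by symbols subject to relations" is
formalized as the abelianization of the corresponding presented group.
-/

variable (F : Type) [Field F]

/-- Relators for `K₂(F)`: the Steinberg symbol relations (A1)-(A3).
(A3) `{u, 1-u} = 1` (for `u ≠ 1`) is encoded as: for units `u, w` with `(w : F) = 1 - u`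
(which forces `u ≠ 1`), `{u, w}` is a relator. -/
def K2Rels : Set (FreeGroup (Fˣ × Fˣ)) :=
  {r | (∃ t u v : Fˣ, r = FreeGroup.of (t * u, v) * (FreeGroup.of (t, v) * FreeGroup.of (u, v))⁻¹) ∨
       (∃ t u v : Fˣ, r = FreeGroup.of (t, u * v) * (FreeGroup.of (t, u) * FreeGroup.of (t, v))⁻¹) ∨
       (∃ u w : Fˣ, (w : F) = 1 - (u : F) ∧ r = FreeGroup.of (u, w))}

/-- `K₂(F)`: the abelian group generated by the symbols `{u,v}`, `u v ∈ Fˣ`,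
subject to the Steinberg symbol relations (A1)-(A3). -/
def K2 : Type := Abelianization (PresentedGroup (K2Rels F))

noncomputable instance : CommGroup (K2 F) := inferInstanceAs (CommGroup (Abelianization _))

/-- The Steinberg symbol `{u,v}` in `K₂(F)`. -/
def K2.sym (u v : Fˣ) : K2 F := Abelianization.of (PresentedGroup.of (u, v))

/-- The subgroup `m·K₂(F)` of `m`-th powers of elements of `K₂(F)`. -/
noncomputable def K2.powSubgroup (m : ℕ) : Subgroup (K2 F) := Subgroup.closure {x | ∃ y : K2 F, x = y ^ m}

/-- Relators for `K₂(2,F)`: the Steinberg cocycle relations (B1)-(B4). -/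
def K2SLRels : Set (FreeGroup (Fˣ × Fˣ)) :=
  {r | (∃ t u v : Fˣ, r = FreeGroup.of (t, u) * FreeGroup.of (t * u, v) *
          (FreeGroup.of (t, u * v) * FreeGroup.of (u, v))⁻¹) ∨
       (r = FreeGroup.of ((1 : Fˣ), (1 : Fˣ))) ∨
       (∃ u v : Fˣ, r = FreeGroup.of (u, v) * (FreeGroup.of (u⁻¹, v⁻¹))⁻¹) ∨
       (∃ u v w : Fˣ, (w : F) = 1 - (u : F) ∧
          r = FreeGroup.of (u, v) * (FreeGroup.of (u, w * v))⁻¹)}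

/-- `K₂(2,F)`: the abelian group generated by the symbols `{u,v}`, `u v ∈ Fˣ`,
subject to the Steinberg cocycle relations (B1)-(B4). -/
def K2SL : Type := Abelianization (PresentedGroup (K2SLRels F))

noncomputable instance : CommGroup (K2SL F) := inferInstanceAs (CommGroup (Abelianization _))

/-- The Steinberg cocycle `{u,v}` in `K₂(2,F)`. -/
def K2SL.sym (u v : Fˣ) : K2SL F := Abelianization.of (PresentedGroup.of (u, v))

/-- The subgroup `m⟨{u²,v}⟩` of `K₂(2,F)` generated by the elements `{u²,v}^m`, `u v ∈ Fˣ`. -/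
noncomputable def K2SL.sqSubgroup (m : ℤ) : Subgroup (K2SL F) :=
  Subgroup.closure {x | ∃ u v : Fˣ, x = (K2SL.sym F (u ^ 2) v) ^ m}

/-- A generalized Cartan matrix: `a_{ii} = 2`, off-diagonal entries `≤ 0`,
and `a_{ij} = 0 ↔ a_{ji} = 0`. -/
def IsGCM {n : ℕ} (A : Matrix (Fin n) (Fin n) ℤ) : Prop :=
  (∀ i, A i i = 2) ∧ (∀ i j, i ≠ j → A i j ≤ 0) ∧ (∀ i j, A i j = 0 ↔ A j i = 0)

/-- Relators for `K₂(A,F)`: the Rehmann–Morita relations (L1)-(L7). -/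
def K2ARels {n : ℕ} (A : Matrix (Fin n) (Fin n) ℤ) : Set (FreeGroup (Fin n × Fˣ × Fˣ)) :=
  {r | (∃ (i : Fin n) (t u v : Fˣ),
          r = FreeGroup.of (i, t, u) * FreeGroup.of (i, t * u, v) *
              (FreeGroup.of (i, t, u * v) * FreeGroup.of (i, u, v))⁻¹) ∨
       (∃ i : Fin n, r = FreeGroup.of (i, 1, 1)) ∨
       (∃ (i : Fin n) (u v : Fˣ),
          r = FreeGroup.of (i, u, v) * (FreeGroup.of (i, u⁻¹, v⁻¹))⁻¹) ∨
       (∃ (i : Fin n) (u v w : Fˣ), (w : F) = 1 - (u : F) ∧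
          r = FreeGroup.of (i, u, v) * (FreeGroup.of (i, u, w * v))⁻¹) ∨
       (∃ (i j : Fin n) (u v : Fˣ), i ≠ j ∧
          r = FreeGroup.of (i, u, v ^ (A j i)) * (FreeGroup.of (j, u ^ (A i j), v))⁻¹) ∨
       (∃ (i j : Fin n) (t u v : Fˣ), i ≠ j ∧
          r = FreeGroup.of (i, t * u, v ^ (A j i)) *
              (FreeGroup.of (i, t, v ^ (A j i)) * FreeGroup.of (i, u, v ^ (A j i)))⁻¹) ∨
       (∃ (i j : Fin n) (t u v : Fˣ), i ≠ j ∧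
          r = FreeGroup.of (i, t ^ (A j i), u * v) *
              (FreeGroup.of (i, t ^ (A j i), u) * FreeGroup.of (i, t ^ (A j i), v))⁻¹)}

/-- `K₂(A,F)`: the abelian group generated by the symbols `c_i(u,v)` subject to (L1)-(L7). -/
def K2A {n : ℕ} (A : Matrix (Fin n) (Fin n) ℤ) : Type :=
  Abelianization (PresentedGroup (K2ARels F A))

noncomputable instance {n : ℕ} (A : Matrix (Fin n) (Fin n) ℤ) : CommGroup (K2A F A) :=
  inferInstanceAs (CommGroup (Abelianization _))

/-- The generator `c_i(u,v)` of `K₂(A,F)`. -/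
def K2A.c {n : ℕ} (A : Matrix (Fin n) (Fin n) ℤ) (i : Fin n) (u v : Fˣ) : K2A F A :=
  Abelianization.of (PresentedGroup.of (i, u, v))

open scoped Classical in
/-- `LGroup F p` is `K₂(F)` when `p` holds and `K₂(2,F)` otherwise.  Taking
`p = "the i-th column of A has an odd entry"` gives the factor `L_i`. -/
noncomputable def LGroup (p : Prop) : Type :=
  Abelianization (PresentedGroup (if p then K2Rels F else K2SLRels F))

noncomputable instance (p : Prop) : CommGroup (LGroup F p) :=
  inferInstanceAs (CommGroup (Abelianization _))

/-- The symbol `{u,v}` (Steinberg symbol resp. cocycle) in `LGroup F p`. -/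
noncomputable def LGroup.sym (p : Prop) (u v : Fˣ) : LGroup F p :=
  Abelianization.of (PresentedGroup.of (u, v))

/-- Relators `x_i^{a_{ji}} = x_j^{a_{ij}}` (`i < j`) for the auxiliary abelian group `G`. -/
def GRels {n : ℕ} (A : Matrix (Fin n) (Fin n) ℤ) : Set (FreeGroup (Fin n)) :=
  {r | ∃ i j : Fin n, i < j ∧ r = FreeGroup.of i ^ (A j i) * (FreeGroup.of j ^ (A i j))⁻¹}

/-- The abelian group `G = ⟨x_1,…,x_n ∣ x_i^{a_{ji}} = x_j^{a_{ij}}, [x_i,x_j] = 1⟩`. -/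
def GGroup {n : ℕ} (A : Matrix (Fin n) (Fin n) ℤ) : Type :=
  Abelianization (PresentedGroup (GRels A))

noncomputable instance {n : ℕ} (A : Matrix (Fin n) (Fin n) ℤ) : CommGroup (GGroup A) :=
  inferInstanceAs (CommGroup (Abelianization _))


section Part2

namespace K2P

def presHom {α : Type} (rels : Set (FreeGroup α)) :
    FreeGroup α →* Abelianization (PresentedGroup rels) :=
  (Abelianization.of).comp (QuotientGroup.mk' (Subgroup.normalClosure rels))

lemma presHom_of {α : Type} (rels : Set (FreeGroup α)) (x : α) :
    presHom rels (FreeGroup.of x) = Abelianization.of (PresentedGroup.of x) := rfl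

lemma presHom_rel {α : Type} (rels : Set (FreeGroup α)) {r : FreeGroup α} (h : r ∈ rels) :
    presHom rels r = 1 := by
  unfold presHom
  have h1 : ((QuotientGroup.mk' (Subgroup.normalClosure rels)) r : PresentedGroup rels) = 1 :=
    (QuotientGroup.eq_one_iff r).2 (Subgroup.subset_normalClosure h)
  exact (congrArg (⇑(Abelianization.of (G := PresentedGroup rels))) h1).trans (map_one _)

variable {F : Type} [Field F]

/- Relations for the symbols in `K2SL`. -/
lemma sl_r1 (t u v : Fˣ) : K2SL.sym F t u * K2SL.sym F (t * u) v
    = K2SL.sym F t (u * v) * K2SL.sym F u v := by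
  have h := presHom_rel (K2SLRels F) (Or.inl ⟨t, u, v, rfl⟩)
  simp only [map_mul, map_inv, presHom_of] at h
  exact mul_inv_eq_one.1 h

lemma sl_r2 : K2SL.sym F 1 1 = 1 := by
  have h := presHom_rel (K2SLRels F) (Or.inr (Or.inl rfl))
  rw [presHom_of] at h; exact h

lemma sl_r3 (u v : Fˣ) : K2SL.sym F u v = K2SL.sym F u⁻¹ v⁻¹ := by
  have h := presHom_rel (K2SLRels F) (Or.inr (Or.inr (Or.inl ⟨u, v, rfl⟩)))
  simp only [map_mul, map_inv, presHom_of] at h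
  exact mul_inv_eq_one.1 h

lemma sl_r4 (u v w : Fˣ) (hw : (w : F) = 1 - (u : F)) :
    K2SL.sym F u v = K2SL.sym F u (w * v) := by
  have h := presHom_rel (K2SLRels F) (Or.inr (Or.inr (Or.inr ⟨u, v, w, hw, rfl⟩)))
  simp only [map_mul, map_inv, presHom_of] at h
  exact mul_inv_eq_one.1 h

/- Relations for the symbols in `K2A`. -/
variable {n : ℕ} {A : Matrix (Fin n) (Fin n) ℤ}

lemma cA_r1 (i : Fin n) (t u v : Fˣ) : K2A.c F A i t u * K2A.c F A i (t * u) v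
    = K2A.c F A i t (u * v) * K2A.c F A i u v := by
  have h := presHom_rel (K2ARels F A) (Or.inl ⟨i, t, u, v, rfl⟩)
  simp only [map_mul, map_inv, presHom_of] at h
  exact mul_inv_eq_one.1 h

lemma cA_r2 (i : Fin n) : K2A.c F A i 1 1 = 1 := by
  have h := presHom_rel (K2ARels F A) (Or.inr (Or.inl ⟨i, rfl⟩))
  rw [presHom_of] at h; exact h

lemma cA_r3 (i : Fin n) (u v : Fˣ) : K2A.c F A i u v = K2A.c F A i u⁻¹ v⁻¹ := by
  have h := presHom_rel (K2ARels F A) (Or.inr (Or.inr (Or.inl ⟨i, u, v, rfl⟩)))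
  simp only [map_mul, map_inv, presHom_of] at h
  exact mul_inv_eq_one.1 h

lemma cA_r4 (i : Fin n) (u v w : Fˣ) (hw : (w : F) = 1 - (u : F)) :
    K2A.c F A i u v = K2A.c F A i u (w * v) := by
  have h := presHom_rel (K2ARels F A)
    (Or.inr (Or.inr (Or.inr (Or.inl ⟨i, u, v, w, hw, rfl⟩))))
  simp only [map_mul, map_inv, presHom_of] at h
  exact mul_inv_eq_one.1 h

lemma cA_r5 (i j : Fin n) (hij : i ≠ j) (u v : Fˣ) :
    K2A.c F A i u (v ^ (A j i)) = K2A.c F A j (u ^ (A i j)) v := by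
  have h := presHom_rel (K2ARels F A)
    (Or.inr (Or.inr (Or.inr (Or.inr (Or.inl ⟨i, j, u, v, hij, rfl⟩)))))
  simp only [map_mul, map_inv, presHom_of] at h
  exact mul_inv_eq_one.1 h

/-- The Steinberg cocycle given by `c_i` in `K₂(A,F)`. -/
def scocA (A : Matrix (Fin n) (Fin n) ℤ) (i : Fin n) : SCoc F (Additive (K2A F A)) where
  s u v := Additive.ofMul (K2A.c F A i u v)
  r1 t u v := congrArg Additive.ofMul (cA_r1 i t u v)
  r2 := congrArg Additive.ofMul (cA_r2 i)
  r3 u v := congrArg Additive.ofMul (cA_r3 i u v)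
  r4 u v w hw := congrArg Additive.ofMul (cA_r4 i u v w hw)

end K2P

end Part2
namespace K2P

section QSide

variable {F : Type} [Field F] (m : ℤ)

/-- The image of the symbol in the quotient `K₂(2,F)/m⟨{u²,v}⟩`. -/
noncomputable def Ssym (u v : Fˣ) : K2SL F ⧸ K2SL.sqSubgroup F m :=
  QuotientGroup.mk (K2SL.sym F u v)

/-- The Steinberg cocycle given by the symbols in the quotient. -/
noncomputable def scocQ : SCoc F (Additive (K2SL F ⧸ K2SL.sqSubgroup F m)) where
  s u v := Additive.ofMul (Ssym m u v)
  r1 t u v := by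
    rw [← ofMul_mul, ← ofMul_mul]
    exact congrArg _ (by
      show ((K2SL.sym F t u * K2SL.sym F (t * u) v : K2SL F) :
          K2SL F ⧸ K2SL.sqSubgroup F m) = _
      rw [sl_r1 t u v]; rfl)
  r2 := congrArg Additive.ofMul (by
    show ((K2SL.sym F 1 1 : K2SL F) : K2SL F ⧸ K2SL.sqSubgroup F m) = _
    rw [sl_r2]; rfl)
  r3 u v := congrArg Additive.ofMul
    (congrArg (QuotientGroup.mk : K2SL F → K2SL F ⧸ K2SL.sqSubgroup F m) (sl_r3 u v))
  r4 u v w hw := congrArg Additive.ofMul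
    (congrArg (QuotientGroup.mk : K2SL F → K2SL F ⧸ K2SL.sqSubgroup F m) (sl_r4 u v w hw))

lemma scocQ_s (u v : Fˣ) : (scocQ (F := F) m).s u v = Additive.ofMul (Ssym m u v) := rfl

lemma q_kill (u v : Fˣ) : m • (scocQ (F := F) m).beta u v = 0 := by
  have h1 : (K2SL.sym F (u ^ 2) v) ^ m ∈ K2SL.sqSubgroup F m :=
    Subgroup.subset_closure ⟨u, v, rfl⟩
  have h2 : ((((K2SL.sym F (u ^ 2) v) ^ m : K2SL F)) :
      K2SL F ⧸ K2SL.sqSubgroup F m) = 1 := (QuotientGroup.eq_one_iff _).2 h1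
  have h3 : (Ssym (F := F) m (u ^ 2) v) ^ m = 1 := by
    rw [Ssym, ← QuotientGroup.mk_zpow, h2]
  have h4 : (scocQ (F := F) m).beta u v = Additive.ofMul (Ssym m (u ^ 2) v) := by
    rw [(scocQ (F := F) m).beta_eq_sq, scocQ_s, pow_two]
  rw [h4, ← ofMul_zpow, h3]
  rfl

end QSide

section Main

variable (a c b' d' : ℤ)

/-- The generalized Cartan matrix of the theorem, with `b = 2 b'`, `d = 2 d'`. -/
def AM : Matrix (Fin 3) (Fin 3) ℤ :=
  !![2, -a, -(2 * b'); -c, 2, -(2 * d'); -1, -1, 2]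

lemma AM_01 : AM a c b' d' 0 1 = -a := by simp [AM]
lemma AM_02 : AM a c b' d' 0 2 = -(2 * b') := by simp [AM]
lemma AM_10 : AM a c b' d' 1 0 = -c := by simp [AM]
lemma AM_12 : AM a c b' d' 1 2 = -(2 * d') := by simp [AM]
lemma AM_20 : AM a c b' d' 2 0 = -1 := by simp [AM]
lemma AM_21 : AM a c b' d' 2 1 = -1 := by simp [AM]

variable {F : Type} [Field F]

/-- The cocycle `c₃` in `K₂(A,F)`. -/
noncomputable def s3 : SCoc F (Additive (K2A F (AM a c b' d'))) :=
  scocA (AM a c b' d') 2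

lemma s3_s (u v : Fˣ) :
    (s3 a c b' d' (F := F)).s u v = Additive.ofMul (K2A.c F (AM a c b' d') 2 u v) := rfl

/-- `c₁(u,v) = b' • β₃(u,v)`. -/
lemma c0_eq (u v : Fˣ) :
    Additive.ofMul (K2A.c F (AM a c b' d') 0 u v) = b' • (s3 a c b' d' (F := F)).beta u v := by
  have h := cA_r5 (A := AM a c b' d') 2 0 (by decide) u⁻¹ v
  rw [AM_02, AM_20] at h
  have h1 : Additive.ofMul (K2A.c F (AM a c b' d') 2 u⁻¹ (v ^ (-(2 * b')))) =
      (-b') • (s3 a c b' d' (F := F)).beta u⁻¹ v := by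
    rw [← s3_s]
    have e : (-(2 * b')) = 2 * (-b') := by ring
    rw [e]
    exact (s3 a c b' d').s_even_right u⁻¹ v (-b')
  rw [h] at h1
  have e2 : (u⁻¹ : Fˣ) ^ (-1 : ℤ) = u := by simp
  rw [e2] at h1
  rw [h1, (s3 a c b' d').beta_inv_left]
  rw [smul_neg, neg_smul, neg_neg]

/-- `c₂(u,v) = d' • β₃(u,v)`. -/
lemma c1_eq (u v : Fˣ) :
    Additive.ofMul (K2A.c F (AM a c b' d') 1 u v) = d' • (s3 a c b' d' (F := F)).beta u v := by
  have h := cA_r5 (A := AM a c b' d') 2 1 (by decide) u⁻¹ v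
  rw [AM_12, AM_21] at h
  have h1 : Additive.ofMul (K2A.c F (AM a c b' d') 2 u⁻¹ (v ^ (-(2 * d')))) =
      (-d') • (s3 a c b' d' (F := F)).beta u⁻¹ v := by
    rw [← s3_s]
    have e : (-(2 * d')) = 2 * (-d') := by ring
    rw [e]
    exact (s3 a c b' d').s_even_right u⁻¹ v (-d')
  rw [h] at h1
  have e2 : (u⁻¹ : Fˣ) ^ (-1 : ℤ) = u := by simp
  rw [e2] at h1
  rw [h1, (s3 a c b' d').beta_inv_left]
  rw [smul_neg, neg_smul, neg_neg]

/-- `(a d' - b' c) • β₃ = 0` in `K₂(A,F)`. -/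
lemma kill_A (u v : Fˣ) :
    (a * d' - b' * c) • (s3 a c b' d' (F := F)).beta u v = 0 := by
  have h := cA_r5 (A := AM a c b' d') 0 1 (by decide) u v
  rw [AM_10, AM_01] at h
  have h1 := congrArg Additive.ofMul h
  rw [c0_eq, c1_eq] at h1
  rw [(s3 a c b' d').beta_zsmul_right, (s3 a c b' d').beta_zsmul_left] at h1
  rw [smul_smul, smul_smul] at h1
  rw [show b' * -c = -(b' * c) by ring] at h1
  rw [show d' * -a = -(a * d') by ring] at h1
  rw [neg_smul, neg_smul, neg_inj] at h1
  rw [sub_smul, ← h1, sub_self]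

/-- `c₃(u^{2b'}, v) = c₁(u,v)`. -/
lemma c3_pow_b (u v : Fˣ) :
    K2A.c F (AM a c b' d') 2 (u ^ (2 * b')) v = K2A.c F (AM a c b' d') 0 u v := by
  apply Additive.ofMul.injective
  rw [c0_eq, ← s3_s, (s3 a c b' d').s_even_left]

lemma c3_pow_d (u v : Fˣ) :
    K2A.c F (AM a c b' d') 2 (u ^ (2 * d')) v = K2A.c F (AM a c b' d') 1 u v := by
  apply Additive.ofMul.injective
  rw [c1_eq, ← s3_s, (s3 a c b' d').s_even_left]

end Main

end K2P

namespace K2P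

section Homs

variable (a c b' d' : ℤ) {F : Type} [Field F]

lemma kill_A' (u v : Fˣ) :
    (K2A.c F (AM a c b' d') 2 (u ^ 2) v) ^ (a * d' - b' * c) = 1 := by
  have h2 := kill_A a c b' d' (F := F) u v
  rw [(s3 a c b' d').beta_eq_sq, s3_s] at h2
  apply Additive.ofMul.injective
  rw [ofMul_zpow, ofMul_one, pow_two]
  exact h2

lemma psicheck : ∀ r ∈ K2SLRels F, FreeGroup.lift
    (fun p : Fˣ × Fˣ => K2A.c F (AM a c b' d') 2 p.1 p.2) r = 1 := by
  rintro r hr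
  rcases hr with ⟨t, u, v, rfl⟩ | rfl | ⟨u, v, rfl⟩ | ⟨u, v, w, hw, rfl⟩
  · simp only [map_mul, map_inv, FreeGroup.lift_apply_of]
    rw [mul_inv_eq_one]
    exact cA_r1 2 t u v
  · simp only [FreeGroup.lift_apply_of]
    exact cA_r2 2
  · simp only [map_mul, map_inv, FreeGroup.lift_apply_of]
    rw [mul_inv_eq_one]
    exact cA_r3 2 u v
  · simp only [map_mul, map_inv, FreeGroup.lift_apply_of]
    rw [mul_inv_eq_one]
    exact cA_r4 2 u v w hw

noncomputable def psi1 : K2SL F →* K2A F (AM a c b' d') :=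
  Abelianization.lift (PresentedGroup.toGroup (psicheck a c b' d'))

lemma psi1_sym (u v : Fˣ) :
    psi1 a c b' d' (K2SL.sym F u v) = K2A.c F (AM a c b' d') 2 u v := by
  rfl

lemma psiker : K2SL.sqSubgroup F (a * d' - b' * c) ≤ (psi1 a c b' d' (F := F)).ker := by
  rw [K2SL.sqSubgroup, Subgroup.closure_le]
  rintro x ⟨u, v, rfl⟩
  simp only [SetLike.mem_coe, MonoidHom.mem_ker, map_zpow, psi1_sym]
  rw [kill_A']

noncomputable def psiF : (K2SL F ⧸ K2SL.sqSubgroup F (a * d' - b' * c)) →* K2A F (AM a c b' d') :=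
  QuotientGroup.lift _ (psi1 a c b' d') (psiker a c b' d')

lemma psiF_Ssym (u v : Fˣ) :
    psiF a c b' d' (Ssym (a * d' - b' * c) u v) = K2A.c F (AM a c b' d') 2 u v := by
  unfold psiF Ssym
  rw [QuotientGroup.lift_mk, psi1_sym]

end Homs

end K2P

namespace K2P

section PhiSide

variable (b' d' : ℤ)

/-- Exponents of the map `φ`. -/
def EV : Fin 3 → ℤ := ![2 * b', 2 * d', 1]

lemma EV_m0 {h} : EV b' d' ⟨0, h⟩ = 2 * b' := rfl
lemma EV_m1 {h} : EV b' d' ⟨1, h⟩ = 2 * d' := rfl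
lemma EV_m2 {h} : EV b' d' ⟨2, h⟩ = 1 := rfl
lemma EV_2 : EV b' d' 2 = 1 := rfl

variable (a c : ℤ)

lemma AM_m01 {h0 h1} : AM a c b' d' ⟨0, h0⟩ ⟨1, h1⟩ = -a := rfl
lemma AM_m02 {h0 h1} : AM a c b' d' ⟨0, h0⟩ ⟨2, h1⟩ = -(2 * b') := rfl
lemma AM_m10 {h0 h1} : AM a c b' d' ⟨1, h0⟩ ⟨0, h1⟩ = -c := rfl
lemma AM_m12 {h0 h1} : AM a c b' d' ⟨1, h0⟩ ⟨2, h1⟩ = -(2 * d') := rfl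
lemma AM_m20 {h0 h1} : AM a c b' d' ⟨2, h0⟩ ⟨0, h1⟩ = -1 := rfl
lemma AM_m21 {h0 h1} : AM a c b' d' ⟨2, h0⟩ ⟨1, h1⟩ = -1 := rfl

variable {F : Type} [Field F]

lemma phicheck : ∀ r ∈ K2ARels F (AM a c b' d'), FreeGroup.lift
    (fun p : Fin 3 × Fˣ × Fˣ =>
      Ssym (a * d' - b' * c) (p.2.1 ^ EV b' d' p.1) p.2.2) r = 1 := by
  rintro r hr
  rcases hr with ⟨i,t,u,v,rfl⟩ | ⟨i,rfl⟩ | ⟨i,u,v,rfl⟩ | ⟨i,u,v,w,hw,rfl⟩ |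
    ⟨i,j,u,v,hij,rfl⟩ | ⟨i,j,t,u,v,hij,rfl⟩ | ⟨i,j,t,u,v,hij,rfl⟩ <;>
    simp only [map_mul, map_inv, FreeGroup.lift_apply_of]
  -- (L1)
  · rw [mul_inv_eq_one]
    apply Additive.ofMul.injective
    simp only [ofMul_mul, ← scocQ_s]
    fin_cases i
    · simp only [EV_m0, (scocQ (F := F) (a * d' - b' * c)).s_even_left,
        (scocQ (F := F) (a * d' - b' * c)).beta_add_left,
        (scocQ (F := F) (a * d' - b' * c)).beta_add_right, smul_add]
      try abel
    · simp only [EV_m1, (scocQ (F := F) (a * d' - b' * c)).s_even_left,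
        (scocQ (F := F) (a * d' - b' * c)).beta_add_left,
        (scocQ (F := F) (a * d' - b' * c)).beta_add_right, smul_add]
      try abel
    · simp only [EV_m2, zpow_one]
      exact (scocQ (F := F) (a * d' - b' * c)).r1 t u v
  -- (L2)
  · rw [one_zpow]
    apply Additive.ofMul.injective
    rw [ofMul_one]
    simp only [← scocQ_s]
    exact (scocQ (F := F) (a * d' - b' * c)).r2
  -- (L3)
  · rw [mul_inv_eq_one]
    apply Additive.ofMul.injective
    simp only [← scocQ_s, inv_zpow]
    exact (scocQ (F := F) (a * d' - b' * c)).r3 (u ^ EV b' d' i) v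
  -- (L4)
  · rw [mul_inv_eq_one]
    apply Additive.ofMul.injective
    simp only [← scocQ_s]
    fin_cases i
    · simp only [EV_m0, (scocQ (F := F) (a * d' - b' * c)).s_even_left]
      rw [(scocQ (F := F) (a * d' - b' * c)).beta_add_right,
        (scocQ (F := F) (a * d' - b' * c)).beta_steinberg u w hw, zero_add]
    · simp only [EV_m1, (scocQ (F := F) (a * d' - b' * c)).s_even_left]
      rw [(scocQ (F := F) (a * d' - b' * c)).beta_add_right,
        (scocQ (F := F) (a * d' - b' * c)).beta_steinberg u w hw, zero_add]
    · simp only [EV_m2, zpow_one]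
      exact (scocQ (F := F) (a * d' - b' * c)).r4 u v w hw
  -- (L5)
  · rw [mul_inv_eq_one]
    apply Additive.ofMul.injective
    simp only [← scocQ_s]
    fin_cases i <;> fin_cases j
    · exact absurd rfl hij
    · -- (0,1)
      rw [AM_m10, AM_m01, EV_m0, EV_m1]
      rw [(scocQ (F := F) (a * d' - b' * c)).s_even_left,
        (scocQ (F := F) (a * d' - b' * c)).s_even_left,
        (scocQ (F := F) (a * d' - b' * c)).beta_zsmul_right,
        (scocQ (F := F) (a * d' - b' * c)).beta_zsmul_left, smul_smul, smul_smul]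
      rw [← sub_eq_zero, ← sub_smul,
        show b' * -c - d' * -a = a * d' - b' * c by ring,
        q_kill (a * d' - b' * c) u v]
    · -- (0,2)
      rw [AM_m20, AM_m02, EV_m0, EV_m2, zpow_one]
      rw [(scocQ (F := F) (a * d' - b' * c)).s_even_left,
        (scocQ (F := F) (a * d' - b' * c)).beta_zsmul_right, smul_smul,
        show -(2 * b') = 2 * -b' by ring,
        (scocQ (F := F) (a * d' - b' * c)).s_even_left,
        show b' * -1 = -b' by ring]
    · -- (1,0)
      rw [AM_m01, AM_m10, EV_m1, EV_m0]
      rw [(scocQ (F := F) (a * d' - b' * c)).s_even_left,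
        (scocQ (F := F) (a * d' - b' * c)).s_even_left,
        (scocQ (F := F) (a * d' - b' * c)).beta_zsmul_right,
        (scocQ (F := F) (a * d' - b' * c)).beta_zsmul_left, smul_smul, smul_smul]
      rw [← sub_eq_zero, ← sub_smul,
        show d' * -a - b' * -c = -(a * d' - b' * c) by ring, neg_smul,
        q_kill (a * d' - b' * c) u v, neg_zero]
    · exact absurd rfl hij
    · -- (1,2)
      rw [AM_m21, AM_m12, EV_m1, EV_m2, zpow_one]
      rw [(scocQ (F := F) (a * d' - b' * c)).s_even_left,
        (scocQ (F := F) (a * d' - b' * c)).beta_zsmul_right, smul_smul,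
        show -(2 * d') = 2 * -d' by ring,
        (scocQ (F := F) (a * d' - b' * c)).s_even_left,
        show d' * -1 = -d' by ring]
    · -- (2,0)
      rw [AM_m02, AM_m20, EV_m2, EV_m0, zpow_one,
        show -(2 * b') = 2 * -b' by ring,
        (scocQ (F := F) (a * d' - b' * c)).s_even_right,
        (scocQ (F := F) (a * d' - b' * c)).s_even_left,
        (scocQ (F := F) (a * d' - b' * c)).beta_zsmul_left, smul_smul,
        show b' * -1 = -b' by ring]
    · -- (2,1)
      rw [AM_m12, AM_m21, EV_m2, EV_m1, zpow_one,
        show -(2 * d') = 2 * -d' by ring,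
        (scocQ (F := F) (a * d' - b' * c)).s_even_right,
        (scocQ (F := F) (a * d' - b' * c)).s_even_left,
        (scocQ (F := F) (a * d' - b' * c)).beta_zsmul_left, smul_smul,
        show d' * -1 = -d' by ring]
    · exact absurd rfl hij
  -- (L6)
  · rw [mul_inv_eq_one]
    apply Additive.ofMul.injective
    simp only [ofMul_mul, ← scocQ_s]
    fin_cases i
    · simp only [EV_m0, (scocQ (F := F) (a * d' - b' * c)).s_even_left,
        (scocQ (F := F) (a * d' - b' * c)).beta_add_left, smul_add]
      try abel
    · simp only [EV_m1, (scocQ (F := F) (a * d' - b' * c)).s_even_left,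
        (scocQ (F := F) (a * d' - b' * c)).beta_add_left, smul_add]
      try abel
    · fin_cases j
      · simp only [EV_m2, zpow_one, AM_m02,
          show -(2 * b') = 2 * -b' by ring,
          (scocQ (F := F) (a * d' - b' * c)).s_even_right,
          (scocQ (F := F) (a * d' - b' * c)).beta_add_left, smul_add]
        try abel
      · simp only [EV_m2, zpow_one, AM_m12,
          show -(2 * d') = 2 * -d' by ring,
          (scocQ (F := F) (a * d' - b' * c)).s_even_right,
          (scocQ (F := F) (a * d' - b' * c)).beta_add_left, smul_add]
        try abel
      · exact absurd rfl hij
  -- (L7)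
  · rw [mul_inv_eq_one]
    apply Additive.ofMul.injective
    simp only [ofMul_mul, ← scocQ_s]
    fin_cases i
    · simp only [EV_m0, (scocQ (F := F) (a * d' - b' * c)).s_even_left,
        (scocQ (F := F) (a * d' - b' * c)).beta_add_right, smul_add]
      try abel
    · simp only [EV_m1, (scocQ (F := F) (a * d' - b' * c)).s_even_left,
        (scocQ (F := F) (a * d' - b' * c)).beta_add_right, smul_add]
      try abel
    · fin_cases j
      · simp only [EV_m2, zpow_one, AM_m02,
          show -(2 * b') = 2 * -b' by ring,
          (scocQ (F := F) (a * d' - b' * c)).s_even_left,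
          (scocQ (F := F) (a * d' - b' * c)).beta_add_right, smul_add]
        try abel
      · simp only [EV_m2, zpow_one, AM_m12,
          show -(2 * d') = 2 * -d' by ring,
          (scocQ (F := F) (a * d' - b' * c)).s_even_left,
          (scocQ (F := F) (a * d' - b' * c)).beta_add_right, smul_add]
        try abel
      · exact absurd rfl hij

noncomputable def phiF : K2A F (AM a c b' d') →*
    (K2SL F ⧸ K2SL.sqSubgroup F (a * d' - b' * c)) :=
  Abelianization.lift (PresentedGroup.toGroup (phicheck b' d' a c))

lemma phiF_c (i : Fin 3) (u v : Fˣ) :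
    phiF b' d' a c (K2A.c F (AM a c b' d') i u v)
      = Ssym (a * d' - b' * c) (u ^ EV b' d' i) v := rfl

end PhiSide

end K2P
namespace K2P

section Final

variable (a c b' d' : ℤ) {F : Type} [Field F]

lemma comp_QQ : (phiF b' d' a c (F := F)).comp (psiF a c b' d') = MonoidHom.id _ := by
  apply QuotientGroup.monoidHom_ext
  apply Abelianization.hom_ext
  apply QuotientGroup.monoidHom_ext
  apply FreeGroup.ext_hom
  rintro ⟨u, v⟩
  show phiF b' d' a c (psiF a c b' d' (Ssym (a * d' - b' * c) u v))
      = Ssym (a * d' - b' * c) u v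
  rw [psiF_Ssym, phiF_c, EV_2, zpow_one]

lemma comp_AA : (psiF a c b' d' (F := F)).comp (phiF b' d' a c) = MonoidHom.id _ := by
  apply Abelianization.hom_ext
  apply QuotientGroup.monoidHom_ext
  apply FreeGroup.ext_hom
  rintro ⟨i, u, v⟩
  show psiF a c b' d' (phiF b' d' a c (K2A.c F (AM a c b' d') i u v))
      = K2A.c F (AM a c b' d') i u v
  rw [phiF_c, psiF_Ssym]
  fin_cases i
  · rw [EV_m0]; exact c3_pow_b a c b' d' u v
  · rw [EV_m1]; exact c3_pow_d a c b' d' u v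
  · rw [EV_m2, zpow_one]; rfl

lemma mainIso :
    Nonempty (K2A F (AM a c b' d') ≃*
      (K2SL F ⧸ K2SL.sqSubgroup F (a * d' - b' * c))) :=
  ⟨MonoidHom.toMulEquiv (phiF b' d' a c) (psiF a c b' d')
    (comp_AA a c b' d') (comp_QQ a c b' d')⟩

end Final

end K2P
/-- For positive integers `a,b,c,d` with `b,d` even and the GCM with rows
`(2,-a,-b)`, `(-c,2,-d)`, `(-1,-1,2)`,
`K₂(A,F) ≅ K₂(2,F) / ((ad-bc)/2)⟨{u²,v}⟩`. -/
theorem K2A_rank3_class1 (a b c d : ℤ) (ha : 0 < a) (hb : 0 < b) (hc : 0 < c) (hd : 0 < d)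
    (hbe : Even b) (hde : Even d) (F : Type) [Field F] :
    Nonempty (K2A F !![2, -a, -b; -c, 2, -d; -1, -1, 2] ≃*
      (K2SL F ⧸ K2SL.sqSubgroup F ((a * d - b * c) / 2))) := by
  obtain ⟨b', rfl⟩ := hbe
  obtain ⟨d', rfl⟩ := hde
  have h1 : -(b' + b') = -(2 * b') := by ring
  have h2 : -(d' + d') = -(2 * d') := by ring
  rw [h1, h2]
  have h3 : (a * (d' + d') - (b' + b') * c) / 2 = a * d' - b' * c := by
    rw [show a * (d' + d') - (b' + b') * c = 2 * (a * d' - b' * c) by ring]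
    exact Int.mul_ediv_cancel_left _ (by norm_num)
  rw [h3]
  exact K2P.mainIso a c b' d'
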